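/- Let N ≥ 2. Inside the Laurent polynomial ring k[t_0^{±1}, …, t_{N-1}^{±1}], set y_m = t_m/t_1^m for 0 ≤ m ≤ N-1 and y_N = t_0/t_1^N, and let B be the subalgebra generated by y_0^{±1}, y_2^{±1}, …, y_N^{±1}. Then k[t_0^{±1}, …, t_{N-1}^{±1}] ≅ B[t_1]/(t_1^N − y_0/y_N); in particular k[t_0^{±1}, …, t_{N-1}^{±1}] is integral over B. -/

import Mathlib

set_option synthInstance.maxHeartbeats 800000
set_option maxHeartbeats 1600000
variable (k : Type*) [Field k]

/-- The image of the indeterminate `t_i` in `Frac k[t_0, …, t_{N-1}]`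
(which contains the Laurent polynomial ring `k[t_0^{±1}, …, t_{N-1}^{±1}]`). -/
noncomputable def t (N : ℕ) (i : Fin N) : FractionRing (MvPolynomial (Fin N) k) :=
  algebraMap (MvPolynomial (Fin N) k) (FractionRing (MvPolynomial (Fin N) k))
    (MvPolynomial.X i)

/-- The element `y_m = t_m / t_1^m` for `0 ≤ m ≤ N - 1`, and `y_N = t_0 / t_1^N`
(uniformly, `y_m = t_{m % N} / t_1^m`). -/
noncomputable def y (N : ℕ) (hN : 2 ≤ N) (m : ℕ) :
    FractionRing (MvPolynomial (Fin N) k) :=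
  t k N ⟨m % N, Nat.mod_lt _ (by omega)⟩ / t k N ⟨1, by omega⟩ ^ m

/-- The Laurent polynomial ring `k[t_0^{±1}, …, t_{N-1}^{±1}]`, realized as the
subalgebra generated by the `t_i` and their inverses. -/
noncomputable def laurentT (N : ℕ) : Subalgebra k (FractionRing (MvPolynomial (Fin N) k)) :=
  Algebra.adjoin k ({z | ∃ i : Fin N, z = t k N i} ∪ {z | ∃ i : Fin N, z = (t k N i)⁻¹})

/-- The subalgebra `B` generated by `y_0^{±1}, y_2^{±1}, …, y_N^{±1}`. -/
noncomputable def Bsub (N : ℕ) (hN : 2 ≤ N) :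
    Subalgebra k (FractionRing (MvPolynomial (Fin N) k)) :=
  Algebra.adjoin k
    {z | ∃ m : ℕ, (m = 0 ∨ (2 ≤ m ∧ m ≤ N)) ∧ (z = y k N hN m ∨ z = (y k N hN m)⁻¹)}


noncomputable instance instFieldF (N : ℕ) : Field (FractionRing (MvPolynomial (Fin N) k)) :=
  inferInstance

noncomputable instance instCommRingB (N : ℕ) (hN : 2 ≤ N) : CommRing (Bsub k N hN) :=
  inferInstance

noncomputable instance instCommRingPolyB (N : ℕ) (hN : 2 ≤ N) :
    CommRing (Polynomial (Bsub k N hN)) :=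
  inferInstance

namespace LaurentAux

abbrev F (N : ℕ) := FractionRing (MvPolynomial (Fin N) k)

lemma phi_inj (N : ℕ) : Function.Injective
    (algebraMap (MvPolynomial (Fin N) k) (F k N)) :=
  IsFractionRing.injective _ _

lemma t_ne_zero (N : ℕ) (i : Fin N) : t k N i ≠ 0 := by
  have := phi_inj k N
  simp only [t, Ne, map_eq_zero_iff _ this]
  exact MvPolynomial.X_ne_zero i

noncomputable def mon (N : ℕ) (v : Fin N → ℤ) : F k N := ∏ i, t k N i ^ v i

lemma mon_add (N : ℕ) (v w : Fin N → ℤ) : mon k N (v + w) = mon k N v * mon k N w := by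
  simp only [mon, Pi.add_apply, ← Finset.prod_mul_distrib]
  exact Finset.prod_congr rfl fun i _ => zpow_add₀ (t_ne_zero k N i) _ _

lemma mon_zero (N : ℕ) : mon k N 0 = 1 := by simp [mon]

lemma mon_ne_zero (N : ℕ) (v : Fin N → ℤ) : mon k N v ≠ 0 :=
  Finset.prod_ne_zero_iff.2 fun i _ => zpow_ne_zero _ (t_ne_zero k N i)

lemma mon_single (N : ℕ) (i : Fin N) (n : ℤ) : mon k N (Pi.single i n) = t k N i ^ n := by
  rw [mon, Finset.prod_eq_single i]
  · simp
  · intro j _ hj; simp [Pi.single_apply, hj]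
  · simp

lemma mon_natCast (N : ℕ) (m : Fin N →₀ ℕ) :
    mon k N (fun i => (m i : ℤ)) =
      algebraMap (MvPolynomial (Fin N) k) (F k N) (MvPolynomial.monomial m 1) := by
  rw [MvPolynomial.monomial_eq, map_mul, Finsupp.prod]
  simp only [map_prod, map_pow, map_one, one_mul, mon]
  rw [Finset.prod_subset (Finset.subset_univ m.support)]
  · exact Finset.prod_congr rfl fun i _ => zpow_natCast (t k N i) (m i)
  · intro i _ hi
    simp [Finsupp.notMem_support_iff.mp hi]


lemma linIndep (N : ℕ) : LinearIndependent k (mon k N) := by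
  rw [linearIndependent_iff]
  intro l hl
  set d : Fin N → ℤ := fun i => ((l.support.sup fun v => (-(v i)).toNat : ℕ) : ℤ) with hdd
  have hd : ∀ v ∈ l.support, ∀ i, 0 ≤ v i + d i := by
    intro v hv i
    have h1 : (-(v i)) ≤ ((-(v i)).toNat : ℤ) := Int.self_le_toNat _
    have h2 : ((-(v i)).toNat : ℤ) ≤ d i := by
      simp only [hdd]
      exact_mod_cast Nat.cast_le.mpr (Finset.le_sup (f := fun w : Fin N → ℤ => (-(w i)).toNat) hv)
    omega
  set e : (Fin N → ℤ) → (Fin N →₀ ℕ) :=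
    fun v => Finsupp.equivFunOnFinite.symm (fun i => (v i + d i).toNat) with hee
  have he : ∀ v ∈ l.support, (fun i => ((e v) i : ℤ)) = v + d := by
    intro v hv
    funext i
    have : (e v) i = (v i + d i).toNat := rfl
    rw [this, Int.toNat_of_nonneg (hd v hv i)]
    rfl
  set P : MvPolynomial (Fin N) k := l.sum (fun v a => MvPolynomial.monomial (e v) a) with hP
  have hPmap : algebraMap (MvPolynomial (Fin N) k) (F k N) P = 0 := by
    rw [hP, Finsupp.sum, map_sum]
    have : ∀ v ∈ l.support,
        algebraMap (MvPolynomial (Fin N) k) (F k N) (MvPolynomial.monomial (e v) (l v))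
          = l v • (mon k N v * mon k N d) := by
      intro v hv
      have h1 : MvPolynomial.monomial (e v) (l v)
          = (MvPolynomial.C (l v)) * MvPolynomial.monomial (e v) 1 := by
        rw [MvPolynomial.C_mul_monomial, mul_one]
      rw [h1, map_mul, ← mon_natCast, he v hv, mon_add, ← MvPolynomial.algebraMap_eq,
        ← IsScalarTower.algebraMap_apply, Algebra.smul_def]
    rw [Finset.sum_congr rfl this]
    simp_rw [← smul_mul_assoc]
    rw [← Finset.sum_mul]
    have : ∑ x ∈ l.support, l x • mon k N x = 0 := by
      rw [← hl, Finsupp.linearCombination_apply, Finsupp.sum]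
    rw [this, zero_mul]
  have hP0 : P = 0 := by
    have := IsFractionRing.injective (MvPolynomial (Fin N) k) (F k N)
    exact this (by rw [hPmap, map_zero])
  ext v₀
  by_contra hv₀
  have hv₀' : v₀ ∈ l.support := Finsupp.mem_support_iff.mpr (by simpa using hv₀)
  have hcoeff : MvPolynomial.coeff (e v₀) P = l v₀ := by
    rw [hP, Finsupp.sum, MvPolynomial.coeff_sum]
    rw [Finset.sum_eq_single v₀]
    · simp [MvPolynomial.coeff_monomial]
    · intro v hv hne
      rw [MvPolynomial.coeff_monomial, if_neg]
      intro heq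
      apply hne
      funext i
      have h1 : ((e v) i : ℤ) = v i + d i := congrFun (he v hv) i
      have h2 : ((e v₀) i : ℤ) = v₀ i + d i := congrFun (he v₀ hv₀') i
      have h3 : (e v) i = (e v₀) i := by rw [heq]
      have := h1.symm.trans ((congrArg _ h3).trans h2)
      omega
    · intro h; exact absurd hv₀' h
  rw [hP0] at hcoeff
  simp only [MvPolynomial.coeff_zero] at hcoeff
  exact hv₀ hcoeff.symm


noncomputable def W (N : ℕ) (v : Fin N → ℤ) : ZMod N := ∑ i, (i.val : ZMod N) * (v i : ZMod N)

lemma W_add (N : ℕ) (v w : Fin N → ℤ) : W N (v + w) = W N v + W N w := by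
  simp only [W, Pi.add_apply, Int.cast_add, mul_add]
  rw [Finset.sum_add_distrib]

lemma W_single (N : ℕ) (i : Fin N) (n : ℤ) :
    W N (Pi.single i n) = (i.val : ZMod N) * (n : ZMod N) := by
  rw [W, Finset.sum_eq_single i]
  · simp
  · intro j _ hj; simp [Pi.single_apply, hj]
  · simp

lemma W_neg (N : ℕ) (v : Fin N → ℤ) : W N (-v) = - W N v := by
  simp [W, Finset.sum_neg_distrib, mul_neg]

lemma mon_neg (N : ℕ) (v : Fin N → ℤ) : mon k N (-v) = (mon k N v)⁻¹ := by
  apply eq_inv_of_mul_eq_one_left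
  rw [← mon_add]
  simp [mon_zero]

noncomputable def Sc (N : ℕ) (c : ZMod N) : Submodule k (F k N) :=
  Submodule.span k (mon k N '' {v | W N v = c})

lemma one_mem_Sc0 (N : ℕ) : (1 : F k N) ∈ Sc k N 0 := by
  apply Submodule.subset_span
  exact ⟨0, by simp [W], mon_zero k N⟩

lemma Sc_mul_mon (N : ℕ) (c : ZMod N) (w : Fin N → ℤ) (x : F k N) (hx : x ∈ Sc k N c) :
    x * mon k N w ∈ Sc k N (c + W N w) := by
  induction hx using Submodule.span_induction with
  | mem z hz =>
    obtain ⟨v, hv, rfl⟩ := hz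
    rw [← mon_add]
    exact Submodule.subset_span ⟨v + w, by rw [Set.mem_setOf_eq, W_add, hv], rfl⟩
  | zero => rw [zero_mul]; exact Submodule.zero_mem _
  | add a b _ _ ha hb => rw [add_mul]; exact Submodule.add_mem _ ha hb
  | smul r a _ ha => rw [smul_mul_assoc]; exact Submodule.smul_mem _ _ ha

lemma Sc_mul_Sc (N : ℕ) (c c' : ZMod N) (x y : F k N) (hx : x ∈ Sc k N c)
    (hy : y ∈ Sc k N c') : x * y ∈ Sc k N (c + c') := by
  induction hy using Submodule.span_induction with
  | mem z hz =>
    obtain ⟨v, hv, rfl⟩ := hz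
    rw [← hv]
    exact Sc_mul_mon k N c v x hx
  | zero => rw [mul_zero]; exact Submodule.zero_mem _
  | add a b _ _ ha hb => rw [mul_add]; exact Submodule.add_mem _ ha hb
  | smul r a _ ha => rw [mul_smul_comm]; exact Submodule.smul_mem _ _ ha

/-- The degree-zero part as a subalgebra. -/
noncomputable def A0 (N : ℕ) : Subalgebra k (F k N) :=
  Submodule.toSubalgebra (Sc k N 0) (one_mem_Sc0 k N)
    (fun x y hx hy => by simpa using Sc_mul_Sc k N 0 0 x y hx hy)

lemma key_indep (N : ℕ) (hN : 0 < N) (c : ℕ → F k N)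
    (hc : ∀ j, j < N → c j ∈ Sc k N (j : ZMod N))
    (hsum : ∑ j ∈ Finset.range N, c j = 0) : ∀ j, j < N → c j = 0 := by
  haveI : NeZero N := ⟨by omega⟩
  have hch : ∀ j ∈ Finset.range N, ∃ l : (Fin N → ℤ) →₀ k,
      l ∈ Finsupp.supported k k {v | W N v = (j : ZMod N)} ∧
      Finsupp.linearCombination k (mon k N) l = c j := by
    intro j hj
    exact (Finsupp.mem_span_image_iff_linearCombination k).mp (hc j (Finset.mem_range.mp hj))
  choose! l hl hlc using hch
  set L : (Fin N → ℤ) →₀ k := ∑ j ∈ Finset.range N, l j with hL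
  have hL0 : L = 0 := by
    have h1 : Finsupp.linearCombination k (mon k N) L = 0 := by
      rw [hL, map_sum]
      rw [Finset.sum_congr rfl hlc, hsum]
    exact linearIndependent_iff.mp (linIndep k N) L h1
  intro j₀ hj₀
  have hlj : l j₀ = 0 := by
    ext v
    by_cases hv : v ∈ (l j₀).support
    · have hWv : W N v = (j₀ : ZMod N) := hl j₀ (Finset.mem_range.mpr hj₀) hv
      have hzero : ∀ j ∈ Finset.range N, j ≠ j₀ → l j v = 0 := by
        intro j hj hne
        by_contra h
        have : W N v = (j : ZMod N) := hl j hj (Finsupp.mem_support_iff.mpr h)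
        rw [hWv] at this
        have hj' := Finset.mem_range.mp hj
        have : j₀ = j := by
          have := congrArg ZMod.val this
          rwa [ZMod.val_natCast_of_lt hj₀, ZMod.val_natCast_of_lt hj'] at this
        exact hne this.symm
      have hLv : L v = 0 := by rw [hL0]; rfl
      rw [hL, Finset.sum_apply'] at hLv
      rw [Finset.sum_eq_single j₀] at hLv
      · exact hLv
      · exact hzero
      · intro h; exact absurd (Finset.mem_range.mpr hj₀) h
    · simpa using Finsupp.notMem_support_iff.mp hv
  rw [← hlc j₀ (Finset.mem_range.mpr hj₀), hlj, map_zero]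


-- exponent vector for y m
noncomputable def u (N : ℕ) (hN : 2 ≤ N) (m : ℕ) : Fin N → ℤ :=
  Pi.single (⟨m % N, Nat.mod_lt _ (by omega)⟩ : Fin N) (1 : ℤ)
    + Pi.single (⟨1, by omega⟩ : Fin N) (-(m : ℤ))

lemma y_eq_mon (N : ℕ) (hN : 2 ≤ N) (m : ℕ) : y k N hN m = mon k N (u N hN m) := by
  rw [u, mon_add, mon_single, mon_single, y, div_eq_mul_inv, zpow_one, zpow_neg, zpow_natCast]

lemma W_u (N : ℕ) (hN : 2 ≤ N) (m : ℕ) : W N (u N hN m) = 0 := by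
  rw [u, W_add, W_single, W_single]
  push_cast [ZMod.natCast_mod]
  ring

lemma y_mem_Sc0 (N : ℕ) (hN : 2 ≤ N) (m : ℕ) : y k N hN m ∈ Sc k N 0 :=
  Submodule.subset_span ⟨u N hN m, W_u N hN m, (y_eq_mon k N hN m).symm⟩

lemma y_inv_mem_Sc0 (N : ℕ) (hN : 2 ≤ N) (m : ℕ) : (y k N hN m)⁻¹ ∈ Sc k N 0 := by
  apply Submodule.subset_span
  exact ⟨-(u N hN m), by rw [Set.mem_setOf_eq, W_neg, W_u, neg_zero],
    by rw [mon_neg, ← y_eq_mon]⟩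

lemma B_le_Sc0 (N : ℕ) (hN : 2 ≤ N) : ∀ x ∈ Bsub k N hN, x ∈ Sc k N 0 := by
  have h : Bsub k N hN ≤ A0 k N := by
    apply Algebra.adjoin_le
    rintro z ⟨m, _, (rfl | rfl)⟩
    · exact y_mem_Sc0 k N hN m
    · exact y_inv_mem_Sc0 k N hN m
  exact fun x hx => h hx

section Main

variable (N : ℕ) (hN : 2 ≤ N)

noncomputable def t1 : F k N := t k N ⟨1, by omega⟩

lemma t1_ne_zero : t1 k N hN ≠ 0 := t_ne_zero k N _

lemma t1_pow_mem_Sc (j : ℕ) : (t1 k N hN) ^ j ∈ Sc k N (j : ZMod N) := by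
  have h : (t1 k N hN) ^ j = mon k N (Pi.single (⟨1, by omega⟩ : Fin N) (j : ℤ)) := by
    rw [mon_single, zpow_natCast]; rfl
  have h2 := Sc_mul_mon k N 0 (Pi.single (⟨1, by omega⟩ : Fin N) (j : ℤ)) 1 (one_mem_Sc0 k N)
  rw [one_mul, zero_add, W_single] at h2
  rw [h]
  convert h2 using 2
  push_cast
  ring

lemma y_mem_B (m : ℕ) (hm : m = 0 ∨ (2 ≤ m ∧ m ≤ N)) : y k N hN m ∈ Bsub k N hN :=
  Algebra.subset_adjoin ⟨m, hm, Or.inl rfl⟩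

lemma y_inv_mem_B (m : ℕ) (hm : m = 0 ∨ (2 ≤ m ∧ m ≤ N)) : (y k N hN m)⁻¹ ∈ Bsub k N hN :=
  Algebra.subset_adjoin ⟨m, hm, Or.inr rfl⟩

lemma t_mem_L (i : Fin N) : t k N i ∈ laurentT k N :=
  Algebra.subset_adjoin (Set.mem_union_left _ ⟨i, rfl⟩)

lemma t_inv_mem_L (i : Fin N) : (t k N i)⁻¹ ∈ laurentT k N :=
  Algebra.subset_adjoin (Set.mem_union_right _ ⟨i, rfl⟩)

lemma B_le_L : ∀ x ∈ Bsub k N hN, x ∈ laurentT k N := by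
  have h : Bsub k N hN ≤ laurentT k N := by
    apply Algebra.adjoin_le
    rintro z ⟨m, _, (rfl | rfl)⟩
    · rw [y, div_eq_mul_inv, ← inv_pow]
      exact mul_mem (t_mem_L k N _) (pow_mem (t_inv_mem_L k N _) m)
    · rw [y, div_eq_mul_inv, mul_inv, inv_inv]
      exact mul_mem (t_inv_mem_L k N _) (pow_mem (t_mem_L k N _) m)
  exact fun x hx => h hx

lemma y_zero_eq : y k N hN 0 = t k N ⟨0, by omega⟩ := by
  rw [y]
  have : (⟨0 % N, Nat.mod_lt _ (by omega)⟩ : Fin N) = ⟨0, by omega⟩ := Fin.ext (Nat.zero_mod N)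
  rw [this, pow_zero, div_one]

lemma y_N_eq : y k N hN N = t k N ⟨0, by omega⟩ / t1 k N hN ^ N := by
  rw [y]
  have : (⟨N % N, Nat.mod_lt _ (by omega)⟩ : Fin N) = ⟨0, by omega⟩ := Fin.ext (Nat.mod_self N)
  rw [this]; rfl

lemma y_div : y k N hN 0 / y k N hN N = t1 k N hN ^ N := by
  rw [y_zero_eq, y_N_eq]
  field_simp
  exact mul_div_cancel_left₀ _ (t_ne_zero k N _)

/-- the element b with ↑b = t1^N -/
noncomputable def b0 : Bsub k N hN :=
  ⟨y k N hN 0 * (y k N hN N)⁻¹,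
    mul_mem (y_mem_B k N hN 0 (Or.inl rfl)) (y_inv_mem_B k N hN N (Or.inr ⟨hN, le_refl N⟩))⟩

lemma b0_coe : (b0 k N hN : F k N) = y k N hN 0 / y k N hN N := (div_eq_mul_inv _ _).symm

lemma b0_coe' : (b0 k N hN : F k N) = t1 k N hN ^ N := by rw [b0_coe, y_div]

noncomputable def fpol : Polynomial (Bsub k N hN) :=
  Polynomial.X ^ N - Polynomial.C (b0 k N hN)

lemma fpol_monic : (fpol k N hN).Monic :=
  Polynomial.monic_X_pow_sub_C _ (by omega)

lemma fpol_natDegree : (fpol k N hN).natDegree = N := Polynomial.natDegree_X_pow_sub_C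

lemma fpol_aeval : Polynomial.aeval (t1 k N hN) (fpol k N hN) = 0 := by
  rw [fpol, map_sub, map_pow, Polynomial.aeval_X, Polynomial.aeval_C]
  have : algebraMap (Bsub k N hN) (F k N) (b0 k N hN) = (b0 k N hN : F k N) := rfl
  rw [this, b0_coe', sub_self]

noncomputable def ψ : AdjoinRoot (fpol k N hN) →ₐ[Bsub k N hN] F k N :=
  AdjoinRoot.liftAlgHom _ (Algebra.ofId _ _) (t1 k N hN) (fpol_aeval k N hN)

noncomputable def pb : PowerBasis (Bsub k N hN) (AdjoinRoot (fpol k N hN)) :=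
  AdjoinRoot.powerBasis' (fpol_monic k N hN)

lemma pb_dim : (pb k N hN).dim = N := fpol_natDegree k N hN

lemma psi_gen : ψ k N hN ((pb k N hN).gen) = t1 k N hN := by
  rw [pb, AdjoinRoot.powerBasis'_gen, ψ]
  exact AdjoinRoot.liftAlgHom_root _ _ _ _

/-- decomposition of ψ z as a sum -/
lemma psi_decomp (z : AdjoinRoot (fpol k N hN)) :
    ψ k N hN z = ∑ j : Fin (pb k N hN).dim,
      ((pb k N hN).basis.repr z j : F k N) * t1 k N hN ^ (j : ℕ) := by
  conv_lhs => rw [← (pb k N hN).basis.sum_repr z]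
  rw [map_sum]
  refine Finset.sum_congr rfl fun j _ => ?_
  rw [map_smul, (pb k N hN).basis_eq_pow, map_pow, psi_gen, Algebra.smul_def]
  rfl

lemma psi_inj : Function.Injective (ψ k N hN) := by
  rw [injective_iff_map_eq_zero]
  intro z hz
  set c : ℕ → F k N := fun j =>
    if h : j < (pb k N hN).dim then
      ((pb k N hN).basis.repr z ⟨j, h⟩ : F k N) * t1 k N hN ^ j else 0 with hc
  have hsum : ∑ j ∈ Finset.range N, c j = 0 := by
    have hr : Finset.range N = Finset.range (pb k N hN).dim := by rw [pb_dim]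
    rw [hr, ← Fin.sum_univ_eq_sum_range, ← hz, psi_decomp]
    refine Finset.sum_congr rfl fun j _ => ?_
    simp only [hc, Fin.is_lt, dif_pos, Fin.eta]
  have hmem : ∀ j, j < N → c j ∈ Sc k N (j : ZMod N) := by
    intro j hj
    have hj' : j < (pb k N hN).dim := by rw [pb_dim]; exact hj
    simp only [hc]
    rw [dif_pos hj']
    have h0 : (((pb k N hN).basis.repr z ⟨j, hj'⟩ : Bsub k N hN) : F k N) ∈ Sc k N 0 :=
      B_le_Sc0 k N hN _ (SetLike.coe_mem _)
    have := Sc_mul_Sc k N 0 (j : ZMod N) _ _ h0 (t1_pow_mem_Sc k N hN j)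
    rwa [zero_add] at this
  have hall := key_indep k N (by omega) c hmem hsum
  have hrepr : ∀ j : Fin (pb k N hN).dim, (pb k N hN).basis.repr z j = 0 := by
    intro j
    have hj : (j : ℕ) < N := lt_of_lt_of_le j.isLt (le_of_eq (pb_dim k N hN))
    have := hall j hj
    simp only [hc, Fin.is_lt, dif_pos, Fin.eta] at this
    rcases mul_eq_zero.mp this with h | h
    · exact Subtype.ext (by simpa using h)
    · exact absurd h (pow_ne_zero _ (t1_ne_zero k N hN))
  have : z = ∑ j : Fin (pb k N hN).dim, (pb k N hN).basis.repr z j • (pb k N hN).basis j :=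
    ((pb k N hN).basis.sum_repr z).symm
  rw [this]
  exact Finset.sum_eq_zero fun j _ => by rw [hrepr j, zero_smul]


noncomputable def ψ' : AdjoinRoot (fpol k N hN) →ₐ[k] F k N :=
  (ψ k N hN).restrictScalars k

lemma psi'_apply (z : AdjoinRoot (fpol k N hN)) : ψ' k N hN z = ψ k N hN z := rfl

lemma B_mem_range (x : F k N) (hx : x ∈ Bsub k N hN) : x ∈ (ψ' k N hN).range :=
  ⟨algebraMap (Bsub k N hN) _ (⟨x, hx⟩ : Bsub k N hN), (ψ k N hN).commutes _⟩

lemma t1_mem_range : t1 k N hN ∈ (ψ' k N hN).range :=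
  ⟨(pb k N hN).gen, psi_gen k N hN⟩

lemma t1_inv_key : (t1 k N hN)⁻¹ = y k N hN N * (y k N hN 0)⁻¹ * t1 k N hN ^ (N - 1) := by
  have h0 := t_ne_zero k N (⟨0, by omega⟩ : Fin N)
  have h1 := t1_ne_zero k N hN
  have hpow : t1 k N hN * t1 k N hN ^ (N - 1) = t1 k N hN ^ N := by
    rw [← pow_succ']
    congr 1
    omega
  apply inv_eq_of_mul_eq_one_right
  rw [y_zero_eq, y_N_eq]
  field_simp
  rw [← hpow]

lemma t1_inv_mem_range : (t1 k N hN)⁻¹ ∈ (ψ' k N hN).range := by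
  rw [t1_inv_key]
  exact mul_mem (mul_mem
      (B_mem_range k N hN _ (y_mem_B k N hN N (Or.inr ⟨hN, le_refl N⟩)))
      (B_mem_range k N hN _ (y_inv_mem_B k N hN 0 (Or.inl rfl))))
    (pow_mem (t1_mem_range k N hN) _)

lemma t_key (i : Fin N) : t k N i = y k N hN (i : ℕ) * t1 k N hN ^ (i : ℕ) := by
  rw [y]
  have h : (⟨(i : ℕ) % N, Nat.mod_lt _ (by omega)⟩ : Fin N) = i :=
    Fin.ext (Nat.mod_eq_of_lt i.isLt)
  rw [h, t1, div_mul_cancel₀]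
  exact pow_ne_zero _ (t1_ne_zero k N hN)

lemma t_mem_range (i : Fin N) : t k N i ∈ (ψ' k N hN).range := by
  by_cases hv : (i : ℕ) = 1
  · have : i = ⟨1, by omega⟩ := Fin.ext hv
    rw [this]
    exact t1_mem_range k N hN
  · rw [t_key k N hN i]
    exact mul_mem
      (B_mem_range k N hN _ (y_mem_B k N hN (i : ℕ) (by have := i.isLt; omega)))
      (pow_mem (t1_mem_range k N hN) _)

lemma t_inv_mem_range (i : Fin N) : (t k N i)⁻¹ ∈ (ψ' k N hN).range := by
  by_cases hv : (i : ℕ) = 1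
  · have : i = ⟨1, by omega⟩ := Fin.ext hv
    rw [this]
    exact t1_inv_mem_range k N hN
  · rw [t_key k N hN i, mul_inv, ← inv_pow]
    exact mul_mem
      (B_mem_range k N hN _ (y_inv_mem_B k N hN (i : ℕ) (by have := i.isLt; omega)))
      (pow_mem (t1_inv_mem_range k N hN) _)

lemma range_eq : (ψ' k N hN).range = laurentT k N := by
  apply le_antisymm
  · rintro x ⟨z, rfl⟩
    rw [show (ψ' k N hN).toRingHom z = ψ k N hN z from rfl, psi_decomp]
    exact sum_mem fun j _ => mul_mem (B_le_L k N hN _ (SetLike.coe_mem _))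
      (pow_mem (t_mem_L k N _) _)
  · rw [laurentT]
    apply Algebra.adjoin_le
    rintro z (⟨i, rfl⟩ | ⟨i, rfl⟩)
    · exact t_mem_range k N hN i
    · exact t_inv_mem_range k N hN i

end Main


end LaurentAux


/-- `k[t_0^{±1}, …, t_{N-1}^{±1}] ≅ B[t_1]/(t_1^N − y_0/y_N)`; in particular the
Laurent polynomial ring is integral over `B`. -/
theorem laurent_iso_and_integral (N : ℕ) (hN : 2 ≤ N) :
    ∃ b : Bsub k N hN,
      (b : FractionRing (MvPolynomial (Fin N) k)) = y k N hN 0 / y k N hN N ∧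
      Nonempty (laurentT k N ≃ₐ[k]
        (Polynomial (Bsub k N hN) ⧸
          Ideal.span {Polynomial.X ^ N - Polynomial.C b})) ∧
      ∀ x ∈ laurentT k N, IsIntegral (Bsub k N hN) x := by
  refine ⟨LaurentAux.b0 k N hN, LaurentAux.b0_coe k N hN, ?_, ?_⟩
  · exact ⟨((AlgEquiv.ofInjective (LaurentAux.ψ' k N hN) (LaurentAux.psi_inj k N hN)).trans
      (Subalgebra.equivOfEq _ _ (LaurentAux.range_eq k N hN))).symm⟩
  · intro x hx
    rw [← LaurentAux.range_eq k N hN] at hx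
    obtain ⟨z, rfl⟩ := hx
    haveI : Module.Finite (Bsub k N hN) (AdjoinRoot (LaurentAux.fpol k N hN)) :=
      (LaurentAux.pb k N hN).finite
    have hz : IsIntegral (Bsub k N hN) z := IsIntegral.of_finite _ _
    exact hz.map (LaurentAux.ψ k N hN)
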